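/- For any schedule σ of jobs J and the associated set E of early jobs, the jobs of E can be rescheduled consecutively from time 0 in non-decreasing order of due date so that all of them remain early; consequently a set E ⊆ J can be the set of early jobs of some schedule if and only if, when E = {j₁,…,j_r} is ordered with d_{j₁} ≤ ⋯ ≤ d_{j_r}, the prefix sums satisfy Σ_{t ≤ s} p_{j_t} ≤ d_{j_s} for all s. -/

import Mathlib

/-- Completion time of job `j` in schedule `σ`. -/
def completion (n : ℕ) (p : Fin n → ℕ) (σ : Equiv.Perm (Fin n)) (j : Fin n) : ℕ :=
  ∑ i ∈ Finset.univ.filter (fun i => σ i ≤ σ j), p i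

/-- The EDD prefix-sum feasibility condition for a set `E` of jobs: when `E` is ordered by
non-decreasing due date, every prefix sum of processing times is at most the corresponding
due date. Equivalently (handling ties), for every `j ∈ E` the total processing time of
jobs of `E` with due date at most `d j` is at most `d j`. -/
def eddFeasible (n : ℕ) (p d : Fin n → ℕ) (E : Finset (Fin n)) : Prop :=
  ∀ j ∈ E, ∑ j' ∈ E.filter (fun j' => d j' ≤ d j), p j' ≤ d j

/-- Any set of early jobs of any schedule satisfies the EDD prefix-sum condition. -/
lemma part1 (n : ℕ) (p d : Fin n → ℕ) (σ : Equiv.Perm (Fin n)) :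
    eddFeasible n p d (Finset.univ.filter (fun j => completion n p σ j ≤ d j)) := by
  intro j hj
  simp only [Finset.mem_filter, Finset.mem_univ, true_and] at hj
  set F := (Finset.univ.filter (fun j => completion n p σ j ≤ d j)).filter
    (fun j' => d j' ≤ d j) with hF
  have hjF : j ∈ F := by simp [hF, hj]
  obtain ⟨k, hkF, hk⟩ := Finset.exists_max_image F (fun i => σ i) ⟨j, hjF⟩
  have hkF' := hkF
  simp only [hF, Finset.mem_filter, Finset.mem_univ, true_and] at hkF'
  calc ∑ j' ∈ F, p j'
      ≤ ∑ i ∈ Finset.univ.filter (fun i => σ i ≤ σ k), p i := by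
        apply Finset.sum_le_sum_of_subset
        intro x hx
        simp only [Finset.mem_filter, Finset.mem_univ, true_and]
        exact hk x hx
    _ ≤ d k := hkF'.1
    _ ≤ d j := hkF'.2

/-- Conversely, an EDD-feasible set can be scheduled (E first, in nondecreasing due-date
order) so that all its jobs are early. -/
lemma part2 (n : ℕ) (p d : Fin n → ℕ) (E : Finset (Fin n)) (hE : eddFeasible n p d E) :
    ∃ σ : Equiv.Perm (Fin n), ∀ j ∈ E, completion n p σ j ≤ d j := by
  classical
  set key : Fin n → ℕ ×ₗ ℕ := fun i => toLex ((if i ∈ E then 0 else 1), d i) with hkey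
  refine ⟨(Tuple.sort key)⁻¹, fun j hj => ?_⟩
  have hmono : Monotone (key ∘ Tuple.sort key) := Tuple.monotone_sort key
  have hsub : Finset.univ.filter (fun i => (Tuple.sort key)⁻¹ i ≤ (Tuple.sort key)⁻¹ j)
      ⊆ E.filter (fun j' => d j' ≤ d j) := by
    intro i hi
    simp only [Finset.mem_filter, Finset.mem_univ, true_and] at hi ⊢
    have h1 : key i ≤ key j := by
      have := hmono hi
      simpa [Function.comp, Equiv.Perm.inv_def] using this
    rw [hkey] at h1
    simp only at h1
    rw [if_pos hj] at h1
    rcases Prod.Lex.toLex_le_toLex.mp h1 with h | ⟨h2, h3⟩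
    · omega
    · constructor
      · by_contra hiE
        rw [if_neg hiE] at h2; omega
      · exact h3
  calc completion n p ((Tuple.sort key)⁻¹) j
      ≤ ∑ j' ∈ E.filter (fun j' => d j' ≤ d j), p j' :=
        Finset.sum_le_sum_of_subset hsub
    _ ≤ d j := hE j hj

/-- For any schedule `σ`, its set of early jobs satisfies the EDD prefix-sum
condition (so its jobs can be rescheduled consecutively from time `0` in non-decreasing
due-date order, all remaining early); consequently, a set `E` can be a set of early jobs of
some schedule iff the prefix-sum condition holds for `E`. -/
theorem early_set_characterization (n : ℕ) (p d : Fin n → ℕ) :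
    (∀ σ : Equiv.Perm (Fin n),
        eddFeasible n p d
          (Finset.univ.filter (fun j => completion n p σ j ≤ d j))) ∧
      (∀ E : Finset (Fin n),
        (∃ σ : Equiv.Perm (Fin n), ∀ j ∈ E, completion n p σ j ≤ d j) ↔
          eddFeasible n p d E) := by
  refine ⟨part1 n p d, fun E => ⟨?_, part2 n p d E⟩⟩
  rintro ⟨σ, hσ⟩ j hj
  have h1 := part1 n p d σ j (by simp [hσ j hj])
  refine le_trans (Finset.sum_le_sum_of_subset ?_) h1
  intro x hx
  simp only [Finset.mem_filter, Finset.mem_univ, true_and] at hx ⊢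
  exact ⟨hσ x hx.1, hx.2⟩
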